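/- Suppose x ∈ ℝᵐ is supported on T∪Δ, y = Ax + w, Δ̃ ⊆ Δ, and Q_{T,λ}(Δ̃) is invertible. Let c(Δ̃) be the regularized least-squares estimate supported on T∪Δ̃. Then ‖c(Δ̃) − x‖₂ ≤ λ f₂(Δ̃)‖x_T − μ̂_T‖₂ + f₃(Δ̃)‖w‖₂ + f₄(Δ̃)‖x_{Δ∖Δ̃}‖₂, where f₂(Δ̃) = ‖Q_{T,λ}(Δ̃)^{-1}‖₂, f₃(Δ̃) = ‖Q_{T,λ}(Δ̃)^{-1}A_{T∪Δ̃}'‖₂, and f₄(Δ̃) = sqrt(‖Q_{T,λ}(Δ̃)^{-1}A_{T∪Δ̃}'A_{Δ∖Δ̃}‖₂² + 1). -/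

import Mathlib

open Matrix BigOperators Finset

noncomputable section

abbrev Idx {m : ℕ} (T : Finset (Fin m)) := {j : Fin m // j ∈ T}

/-- Submatrix of `A` consisting of the columns indexed by `T`. -/
def colsub {n m : ℕ} (A : Matrix (Fin n) (Fin m) ℝ) (T : Finset (Fin m)) :
    Matrix (Fin n) (Idx T) ℝ := Matrix.of fun i j => A i j.1

/-- Euclidean (ℓ2) norm of a finitely indexed vector. -/
def l2 {α : Type*} [Fintype α] (v : α → ℝ) : ℝ := Real.sqrt (∑ i, v i ^ 2)

/-- ℓ1 norm. -/
def l1 {α : Type*} [Fintype α] (v : α → ℝ) : ℝ := ∑ i, |v i|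

/-- ℓ∞ (sup) norm. -/
def linf {α : Type*} [Fintype α] (v : α → ℝ) : ℝ := ⨆ i, |v i|

/-- Spectral (ℓ2 operator) norm of a matrix. -/
def spec {α β : Type*} [Fintype α] [Fintype β] [DecidableEq β] (M : Matrix α β ℝ) : ℝ :=
  ‖LinearMap.toContinuousLinearMap (Matrix.toEuclideanLin M)‖

/-- `Q_{T,λ}(S) = A_{T∪S}' A_{T∪S} + λ·diag(I_T, 0_S)`. -/
def Qmat {n m : ℕ} (A : Matrix (Fin n) (Fin m) ℝ) (T S : Finset (Fin m)) (lam : ℝ) :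
    Matrix (Idx (T ∪ S)) (Idx (T ∪ S)) ℝ :=
  (colsub A (T ∪ S))ᵀ * colsub A (T ∪ S) +
    lam • (Matrix.of (fun i j => if i = j ∧ (i : Fin m) ∈ T then (1 : ℝ) else 0) :
      Matrix (Idx (T ∪ S)) (Idx (T ∪ S)) ℝ)

/-- `M_{T,λ} = I − A_T (A_T'A_T + λ I_T)⁻¹ A_T'`. -/
def Mmat {n m : ℕ} (A : Matrix (Fin n) (Fin m) ℝ) (T : Finset (Fin m)) (lam : ℝ) :
    Matrix (Fin n) (Fin n) ℝ :=
  1 - colsub A T * ((colsub A T)ᵀ * colsub A T + lam • 1)⁻¹ * (colsub A T)ᵀ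

/-- `P_{T,λ}(Δ) = (A_Δ' M A_Δ)⁻¹`. -/
def Pmat {n m : ℕ} (A : Matrix (Fin n) (Fin m) ℝ) (T Δ : Finset (Fin m)) (lam : ℝ) :
    Matrix (Idx Δ) (Idx Δ) ℝ :=
  ((colsub A Δ)ᵀ * Mmat A T lam * colsub A Δ)⁻¹

/-- The regularized least-squares estimate supported on `T ∪ S`:
`c_{T∪S} = Q⁻¹ (A_{T∪S}' y + [λμ̂_T ; 0_S])`, zero outside `T ∪ S`. -/
def cvec {n m : ℕ} (A : Matrix (Fin n) (Fin m) ℝ) (T S : Finset (Fin m)) (lam : ℝ)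
    (y : Fin n → ℝ) (μ : Fin m → ℝ) : Fin m → ℝ :=
  fun i => if h : i ∈ T ∪ S then
    (Qmat A T S lam)⁻¹.mulVec
      (fun j => (∑ k, A k j.1 * y k) + (if (j : Fin m) ∈ T then lam * μ j.1 else 0)) ⟨i, h⟩
  else 0

/-- The reg-mod-BPDN objective
`L(b) = γ‖b_{T^c}‖₁ + (1/2)‖y − Ab‖₂² + (λ/2)‖b_T − μ̂_T‖₂²`. -/
def Lobj {n m : ℕ} (A : Matrix (Fin n) (Fin m) ℝ) (T : Finset (Fin m)) (γ lam : ℝ)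
    (y : Fin n → ℝ) (μ : Fin m → ℝ) (b : Fin m → ℝ) : ℝ :=
  γ * (∑ i ∈ Tᶜ, |b i|) + (1/2) * (∑ i, (y i - A.mulVec b i) ^ 2) +
    (lam/2) * (∑ i ∈ T, (b i - μ i) ^ 2)

/-- The quadratic part `L₁(b) = (1/2)‖y − Ab‖₂² + (λ/2)‖b_T − μ̂_T‖₂²`. -/
def L1obj {n m : ℕ} (A : Matrix (Fin n) (Fin m) ℝ) (T : Finset (Fin m)) (lam : ℝ)
    (y : Fin n → ℝ) (μ : Fin m → ℝ) (b : Fin m → ℝ) : ℝ :=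
  (1/2) * (∑ i, (y i - A.mulVec b i) ^ 2) + (lam/2) * (∑ i ∈ T, (b i - μ i) ^ 2)

/-- `ERC_{T,λ}(Δ) = 1 − max_{ω∉T∪Δ} ‖P(Δ) A_Δ' M A_ω‖₁`. -/
def ERC {n m : ℕ} (A : Matrix (Fin n) (Fin m) ℝ) (T Δ : Finset (Fin m)) (lam : ℝ) : ℝ :=
  1 - ⨆ ω : Idx ((T ∪ Δ)ᶜ),
    l1 ((Pmat A T Δ lam * (colsub A Δ)ᵀ * Mmat A T lam).mulVec (fun i => A i ω.1))

/-- `f₁(Δ)`. -/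
def f1 {n m : ℕ} (A : Matrix (Fin n) (Fin m) ℝ) (T Δ : Finset (Fin m)) (lam : ℝ) : ℝ :=
  Real.sqrt
    (spec (((colsub A T)ᵀ * colsub A T + lam • 1)⁻¹ * (colsub A T)ᵀ * colsub A Δ *
        Pmat A T Δ lam) ^ 2 + spec (Pmat A T Δ lam) ^ 2)

/-- `f₂(Δ) = ‖Q⁻¹‖₂`. -/
def f2 {n m : ℕ} (A : Matrix (Fin n) (Fin m) ℝ) (T Δ : Finset (Fin m)) (lam : ℝ) : ℝ :=
  spec ((Qmat A T Δ lam)⁻¹)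

/-- `f₃(Δ) = ‖Q⁻¹ A_{T∪Δ}'‖₂`. -/
def f3 {n m : ℕ} (A : Matrix (Fin n) (Fin m) ℝ) (T Δ : Finset (Fin m)) (lam : ℝ) : ℝ :=
  spec ((Qmat A T Δ lam)⁻¹ * (colsub A (T ∪ Δ))ᵀ)

/-- `f₄(Δ̃) = sqrt(‖Q(Δ̃)⁻¹ A_{T∪Δ̃}' A_{Δ∖Δ̃}‖₂² + 1)`. -/
def f4 {n m : ℕ} (A : Matrix (Fin n) (Fin m) ℝ) (T Δ Δt : Finset (Fin m)) (lam : ℝ) : ℝ :=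
  Real.sqrt
    (spec ((Qmat A T Δt lam)⁻¹ * (colsub A (T ∪ Δt))ᵀ * colsub A (Δ \ Δt)) ^ 2 + 1)

/-- Numerator of `γ*`: `‖A_{(T∪Δ)^c}'(y − A c(Δ))‖_∞`. -/
def gammaNum {n m : ℕ} (A : Matrix (Fin n) (Fin m) ℝ) (T Δ : Finset (Fin m)) (lam : ℝ)
    (y : Fin n → ℝ) (μ : Fin m → ℝ) : ℝ :=
  linf (fun j : Idx ((T ∪ Δ)ᶜ) =>
    ∑ i, A i j.1 * (y i - A.mulVec (cvec A T Δ lam y μ) i))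

/-- `γ*_{T,λ}(Δ)`. -/
def gammaStar {n m : ℕ} (A : Matrix (Fin n) (Fin m) ℝ) (T Δ : Finset (Fin m)) (lam : ℝ)
    (y : Fin n → ℝ) (μ : Fin m → ℝ) : ℝ :=
  gammaNum A T Δ lam y μ / ERC A T Δ lam



section Stmt7Helpers

lemma l2_nonneg' {α : Type*} [Fintype α] (v : α → ℝ) : 0 ≤ l2 v := Real.sqrt_nonneg _

lemma spec_nonneg' {α β : Type*} [Fintype α] [Fintype β] [DecidableEq β] (M : Matrix α β ℝ) :
    0 ≤ spec M := norm_nonneg _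

lemma l2_eq_norm' {α : Type*} [Fintype α] (v : α → ℝ) :
    l2 v = ‖(WithLp.equiv 2 (α → ℝ)).symm v‖ := by
  rw [EuclideanSpace.norm_eq]
  simp [l2, sq_abs]

lemma l2_mulVec_le' {α β : Type*} [Fintype α] [Fintype β] [DecidableEq β]
    (M : Matrix α β ℝ) (v : β → ℝ) : l2 (M.mulVec v) ≤ spec M * l2 v := by
  have h := (LinearMap.toContinuousLinearMap (Matrix.toEuclideanLin M)).le_opNorm
    ((WithLp.equiv 2 (β → ℝ)).symm v)
  simpa [spec, l2_eq_norm', Matrix.toEuclideanLin_apply_piLp_toLp] using h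

lemma l2_add_le' {α : Type*} [Fintype α] (u v : α → ℝ) :
    l2 (fun i => u i + v i) ≤ l2 u + l2 v := by
  rw [l2_eq_norm', l2_eq_norm', l2_eq_norm']
  exact norm_add_le ((WithLp.equiv 2 (α → ℝ)).symm u) ((WithLp.equiv 2 (α → ℝ)).symm v)

lemma sum_dite_sq' {m : ℕ} (S : Finset (Fin m)) (f : Idx S → ℝ) :
    ∑ i : Fin m, (if h : i ∈ S then f ⟨i, h⟩ else 0) ^ 2 = ∑ i : Idx S, f i ^ 2 := by
  classical
  rw [← Finset.sum_subset S.subset_univ (fun i _ hi => by simp [hi])]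
  rw [Finset.univ_eq_attach,
    ← Finset.sum_attach S fun i => (if h : i ∈ S then f ⟨i, h⟩ else 0) ^ 2]
  exact Finset.sum_congr rfl fun i _ => by simp [i.2]

lemma l2_dite' {m : ℕ} (S : Finset (Fin m)) (f : Idx S → ℝ) :
    l2 (fun i => if h : i ∈ S then f ⟨i, h⟩ else 0) = l2 f := by
  unfold l2; rw [sum_dite_sq']

lemma sum_ite_sub' {m : ℕ} (T S : Finset (Fin m)) (hTS : T ⊆ S) (g : Fin m → ℝ) :
    ∑ j : Idx S, (if (j : Fin m) ∈ T then g j.1 else 0) ^ 2 = ∑ j : Idx T, g j.1 ^ 2 := by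
  classical
  rw [Finset.univ_eq_attach, Finset.univ_eq_attach,
    Finset.sum_attach S fun j => (if j ∈ T then g j else 0) ^ 2,
    Finset.sum_attach T fun j => g j ^ 2,
    ← Finset.sum_subset hTS fun j _ hj => by simp [hj]]
  exact Finset.sum_congr rfl fun j hj => by simp [hj]

lemma l2_split_sq' {m : ℕ} (S R : Finset (Fin m)) (hd : Disjoint S R)
    (g : Idx S → ℝ) (f : Idx R → ℝ) :
    l2 (fun i => (if h : i ∈ S then g ⟨i, h⟩ else 0) -
        (if h : i ∈ R then f ⟨i, h⟩ else 0)) ^ 2 = l2 g ^ 2 + l2 f ^ 2 := by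
  classical
  unfold l2
  rw [Real.sq_sqrt (Finset.sum_nonneg fun i _ => sq_nonneg _),
    Real.sq_sqrt (Finset.sum_nonneg fun i _ => sq_nonneg _),
    Real.sq_sqrt (Finset.sum_nonneg fun i _ => sq_nonneg _)]
  rw [← sum_dite_sq' S g, ← sum_dite_sq' R f, ← Finset.sum_add_distrib]
  refine Finset.sum_congr rfl fun i _ => ?_
  by_cases hS : i ∈ S
  · have hR : i ∉ R := Finset.disjoint_left.mp hd hS
    simp [hS, hR]
  · by_cases hR : i ∈ R <;> simp [hS, hR]

end Stmt7Helpers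

/-- For `Δ̃ ⊆ Δ`,
`‖c(Δ̃) − x‖₂ ≤ λf₂(Δ̃)‖x_T − μ̂_T‖₂ + f₃(Δ̃)‖w‖₂ + f₄(Δ̃)‖x_{Δ∖Δ̃}‖₂`. -/
theorem stmt7 {n m : ℕ} (A : Matrix (Fin n) (Fin m) ℝ) (T Δ Δt : Finset (Fin m))
    (hTΔ : Disjoint T Δ) (hsub : Δt ⊆ Δ) (lam : ℝ) (hlam : 0 ≤ lam)
    (x : Fin m → ℝ) (w y : Fin n → ℝ) (μ : Fin m → ℝ)
    (hx : ∀ i ∉ T ∪ Δ, x i = 0)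
    (hy : y = fun i => A.mulVec x i + w i)
    (hQ : IsUnit (Qmat A T Δt lam)) :
    l2 (fun i => cvec A T Δt lam y μ i - x i) ≤
      lam * f2 A T Δt lam * l2 (fun j : Idx T => x j.1 - μ j.1) +
        f3 A T Δt lam * l2 w +
        f4 A T Δ Δt lam * l2 (fun j : Idx (Δ \ Δt) => x j.1) := by
  classical
  simp only [f2, f3, f4]
  set S := T ∪ Δt with hSdef
  set R := Δ \ Δt with hRdef
  have hTS : T ⊆ S := Finset.subset_union_left
  have hSR : Disjoint S R := by
    rw [Finset.disjoint_left]
    intro a haS haR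
    rcases Finset.mem_union.mp haS with h | h
    · exact (Finset.disjoint_left.mp hTΔ h) (Finset.mem_sdiff.mp haR).1
    · exact (Finset.mem_sdiff.mp haR).2 h
  have hSRU : S ∪ R = T ∪ Δ := by
    ext a
    simp only [hSdef, hRdef, Finset.mem_union, Finset.mem_sdiff]
    constructor
    · rintro ((h | h) | ⟨h, -⟩)
      · exact Or.inl h
      · exact Or.inr (hsub h)
      · exact Or.inr h
    · rintro (h | h)
      · exact Or.inl (Or.inl h)
      · by_cases ht : a ∈ Δt
        · exact Or.inl (Or.inr ht)
        · exact Or.inr ⟨h, ht⟩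
  set Q := Qmat A T Δt lam with hQdef
  have hQinv : Q⁻¹ * Q = 1 :=
    Matrix.nonsing_inv_mul _ ((Matrix.isUnit_iff_isUnit_det _).mp hQ)
  set x₂ : Idx R → ℝ := fun j => x j.1 with hx₂
  set x₁ : Idx S → ℝ := fun j => x j.1 with hx₁
  set AS : Matrix (Fin n) (Idx S) ℝ := colsub A S with hASdef
  set AR : Matrix (Fin n) (Idx R) ℝ := colsub A R with hARdef
  set p : Idx S → ℝ := fun j => lam * (if (j : Fin m) ∈ T then μ j.1 - x j.1 else 0) with hpdef
  set uS : Idx S → ℝ := Q⁻¹.mulVec p with hudef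
  set vS : Idx S → ℝ := (Q⁻¹ * ASᵀ).mulVec w with hvdef
  set zS : Idx S → ℝ := (Q⁻¹ * ASᵀ * AR).mulVec x₂ with hzdef
  -- splitting A x
  have hsplit : ∀ k, A.mulVec x k = AS.mulVec x₁ k + AR.mulVec x₂ k := by
    intro k
    have h1 : A.mulVec x k = ∑ j ∈ S ∪ R, A k j * x j := by
      rw [Matrix.mulVec, dotProduct]
      exact (Finset.sum_subset (Finset.subset_univ _) (fun j _ hj => by
        rw [hx j (by rwa [← hSRU]), mul_zero])).symm
    rw [h1, Finset.sum_union hSR]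
    congr 1
    · rw [Matrix.mulVec, dotProduct, Finset.univ_eq_attach,
        ← Finset.sum_attach S fun j => A k j * x j]
      rfl
    · rw [Matrix.mulVec, dotProduct, Finset.univ_eq_attach,
        ← Finset.sum_attach R fun j => A k j * x j]
      rfl
  have hAt : ∀ (t : Fin n → ℝ) (j : Idx S), ∑ k, A k j.1 * t k = ASᵀ.mulVec t j := by
    intro t j
    rw [Matrix.mulVec, dotProduct]
    rfl
  have hD : ∀ j : Idx S,
      (Matrix.of (fun i j' => if i = j' ∧ (i : Fin m) ∈ T then (1 : ℝ) else 0) :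
        Matrix (Idx S) (Idx S) ℝ).mulVec x₁ j = if (j : Fin m) ∈ T then x j.1 else 0 := by
    intro j
    rw [Matrix.mulVec, dotProduct, Finset.sum_eq_single j]
    · by_cases h : (j : Fin m) ∈ T <;> simp [h, hx₁]
    · intro k _ hk
      simp [Matrix.of_apply, Ne.symm hk]
    · intro h
      exact absurd (Finset.mem_univ j) h
  have hb : ∀ j : Idx S,
      (∑ k, A k j.1 * y k) + (if (j : Fin m) ∈ T then lam * μ j.1 else 0)
        = Q.mulVec x₁ j + (p j + (ASᵀ.mulVec w j + (ASᵀ * AR).mulVec x₂ j)) := by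
    intro j
    have hy' : ∀ k, y k = AS.mulVec x₁ k + AR.mulVec x₂ k + w k := by
      intro k
      rw [hy]
      rw [← hsplit k]
    have h1 : ∑ k, A k j.1 * y k
        = (ASᵀ * AS).mulVec x₁ j + ((ASᵀ * AR).mulVec x₂ j + ASᵀ.mulVec w j) := by
      calc ∑ k, A k j.1 * y k
          = ∑ k, (A k j.1 * AS.mulVec x₁ k + (A k j.1 * AR.mulVec x₂ k + A k j.1 * w k)) := by
            refine Finset.sum_congr rfl fun k _ => ?_
            rw [hy' k]; ring
        _ = (∑ k, A k j.1 * AS.mulVec x₁ k) + ((∑ k, A k j.1 * AR.mulVec x₂ k)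
              + ∑ k, A k j.1 * w k) := by
            rw [Finset.sum_add_distrib, Finset.sum_add_distrib]
        _ = (ASᵀ * AS).mulVec x₁ j + ((ASᵀ * AR).mulVec x₂ j + ASᵀ.mulVec w j) := by
            rw [hAt (AS.mulVec x₁) j, hAt (AR.mulVec x₂) j, hAt w j,
              Matrix.mulVec_mulVec, Matrix.mulVec_mulVec]
    have h2 : Q.mulVec x₁ j = (ASᵀ * AS).mulVec x₁ j
        + lam * (if (j : Fin m) ∈ T then x j.1 else 0) := by
      rw [hQdef, Qmat, Matrix.add_mulVec, Matrix.smul_mulVec]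
      have := hD j
      simp only [← hASdef, Pi.add_apply, Pi.smul_apply, smul_eq_mul]
      rw [this]
    rw [h1, h2, hpdef]
    by_cases hj : (j : Fin m) ∈ T <;> simp [hj] <;> ring
  -- key identity on S
  have hkey : ∀ (i : Fin m) (h : i ∈ S),
      cvec A T Δt lam y μ i - x i = uS ⟨i, h⟩ + vS ⟨i, h⟩ + zS ⟨i, h⟩ := by
    intro i h
    have hc : cvec A T Δt lam y μ i
        = Q⁻¹.mulVec (fun j : Idx S =>
            (∑ k, A k j.1 * y k) + (if (j : Fin m) ∈ T then lam * μ j.1 else 0)) ⟨i, h⟩ := by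
      simp only [cvec]
      rw [dif_pos h]
    have hbv : (fun j : Idx S =>
        (∑ k, A k j.1 * y k) + (if (j : Fin m) ∈ T then lam * μ j.1 else 0))
        = Q.mulVec x₁ + (p + (ASᵀ.mulVec w + (ASᵀ * AR).mulVec x₂)) := funext hb
    have hmv : Q⁻¹.mulVec (Q.mulVec x₁ + (p + (ASᵀ.mulVec w + (ASᵀ * AR).mulVec x₂)))
        = x₁ + (uS + (vS + zS)) := by
      rw [Matrix.mulVec_add, Matrix.mulVec_add, Matrix.mulVec_add,
        Matrix.mulVec_mulVec, hQinv, Matrix.one_mulVec,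
        Matrix.mulVec_mulVec, Matrix.mulVec_mulVec]
      rw [hudef, hvdef, hzdef, Matrix.mul_assoc]
    rw [hc, hbv, hmv]
    simp only [Pi.add_apply, hx₁]
    ring
  -- global decomposition
  have hfun : (fun i => cvec A T Δt lam y μ i - x i)
      = fun i => (if h : i ∈ S then uS ⟨i, h⟩ else 0) +
          ((if h : i ∈ S then vS ⟨i, h⟩ else 0) +
            ((if h : i ∈ S then zS ⟨i, h⟩ else 0) - (if h : i ∈ R then x₂ ⟨i, h⟩ else 0))) := by
    funext i
    by_cases h : i ∈ S
    · have hR : i ∉ R := Finset.disjoint_left.mp hSR h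
      rw [dif_pos h, dif_pos h, dif_pos h, dif_neg hR, hkey i h]
      ring
    · have hc0 : cvec A T Δt lam y μ i = 0 := by
        simp only [cvec]
        rw [dif_neg h]
      rw [dif_neg h, dif_neg h, dif_neg h, hc0]
      by_cases hr : i ∈ R
      · rw [dif_pos hr, hx₂]
        ring
      · rw [dif_neg hr, hx i (by
          rw [← hSRU]
          exact fun hm => (Finset.mem_union.mp hm).elim h hr)]
        ring
  -- three bounds
  have hbu : l2 (fun i => if h : i ∈ S then uS ⟨i, h⟩ else 0)
      ≤ lam * spec Q⁻¹ * l2 (fun j : Idx T => x j.1 - μ j.1) := by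
    rw [l2_dite' S uS, hudef]
    have h1 := l2_mulVec_le' Q⁻¹ p
    have h2 : l2 p = lam * l2 (fun j : Idx T => x j.1 - μ j.1) := by
      unfold l2
      have h3 : ∑ j : Idx S, p j ^ 2
          = lam ^ 2 * ∑ j : Idx S, (if (j : Fin m) ∈ T then x j.1 - μ j.1 else 0) ^ 2 := by
        rw [Finset.mul_sum]
        refine Finset.sum_congr rfl fun j _ => ?_
        by_cases hj : (j : Fin m) ∈ T <;> simp [hpdef, hj] <;> ring
      rw [h3, sum_ite_sub' T S hTS fun j => x j - μ j,
        Real.sqrt_mul (sq_nonneg lam), Real.sqrt_sq hlam]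
    rw [h2] at h1
    calc l2 (Q⁻¹.mulVec p) ≤ spec Q⁻¹ * (lam * l2 fun j : Idx T => x j.1 - μ j.1) := h1
      _ = lam * spec Q⁻¹ * l2 (fun j : Idx T => x j.1 - μ j.1) := by ring
  have hbv2 : l2 (fun i => if h : i ∈ S then vS ⟨i, h⟩ else 0)
      ≤ spec (Q⁻¹ * ASᵀ) * l2 w := by
    rw [l2_dite' S vS, hvdef]
    exact l2_mulVec_le' _ _
  have hbz : l2 (fun i => (if h : i ∈ S then zS ⟨i, h⟩ else 0) -
        (if h : i ∈ R then x₂ ⟨i, h⟩ else 0))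
      ≤ Real.sqrt (spec (Q⁻¹ * ASᵀ * AR) ^ 2 + 1) * l2 x₂ := by
    have hz1 : l2 zS ≤ spec (Q⁻¹ * ASᵀ * AR) * l2 x₂ := by
      rw [hzdef]; exact l2_mulVec_le' _ _
    have hsq := l2_split_sq' S R hSR zS x₂
    have h2 : l2 (fun i => (if h : i ∈ S then zS ⟨i, h⟩ else 0) -
          (if h : i ∈ R then x₂ ⟨i, h⟩ else 0)) ^ 2
        ≤ (spec (Q⁻¹ * ASᵀ * AR) ^ 2 + 1) * l2 x₂ ^ 2 := by
      rw [hsq]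
      nlinarith [l2_nonneg' zS, l2_nonneg' x₂, spec_nonneg' (Q⁻¹ * ASᵀ * AR)]
    calc l2 (fun i => (if h : i ∈ S then zS ⟨i, h⟩ else 0) -
          (if h : i ∈ R then x₂ ⟨i, h⟩ else 0))
        = Real.sqrt (l2 (fun i => (if h : i ∈ S then zS ⟨i, h⟩ else 0) -
            (if h : i ∈ R then x₂ ⟨i, h⟩ else 0)) ^ 2) :=
          (Real.sqrt_sq (l2_nonneg' _)).symm
      _ ≤ Real.sqrt ((spec (Q⁻¹ * ASᵀ * AR) ^ 2 + 1) * l2 x₂ ^ 2) := Real.sqrt_le_sqrt h2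
      _ = Real.sqrt (spec (Q⁻¹ * ASᵀ * AR) ^ 2 + 1) * l2 x₂ := by
          rw [Real.sqrt_mul (by positivity), Real.sqrt_sq (l2_nonneg' _)]
  -- assemble
  rw [hfun]
  have t1 := l2_add_le' (fun i => if h : i ∈ S then uS ⟨i, h⟩ else 0)
    (fun i => (if h : i ∈ S then vS ⟨i, h⟩ else 0) +
      ((if h : i ∈ S then zS ⟨i, h⟩ else 0) - (if h : i ∈ R then x₂ ⟨i, h⟩ else 0)))
  have t2 := l2_add_le' (fun i => if h : i ∈ S then vS ⟨i, h⟩ else 0)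
    (fun i => (if h : i ∈ S then zS ⟨i, h⟩ else 0) - (if h : i ∈ R then x₂ ⟨i, h⟩ else 0))
  linarith [t1, t2, hbu, hbv2, hbz]
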